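/- If 𝒜 is a z-filter on Lmc(S), then E(E⁻(𝒜)) is the largest e-filter contained in 𝒜. -/

import Mathlib

open scoped BoundedContinuousFunction
open WeakDual

/-- A semitopological semigroup: multiplication is separately continuous. -/
class SemitopologicalSemigroup (S : Type*) [TopologicalSpace S] [Mul S] : Prop where
  continuous_mul_left : ∀ s : S, Continuous fun x : S => s * x
  continuous_mul_right : ∀ s : S, Continuous fun x : S => x * s

/-- Left translate `L_s f (x) = f (s x)` as a bounded continuous function. -/
noncomputable def lTrans {S : Type*} [TopologicalSpace S] [Mul S] [SemitopologicalSemigroup S]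
    (s : S) (f : S →ᵇ ℂ) : S →ᵇ ℂ :=
  f.compContinuous ⟨fun x => s * x, SemitopologicalSemigroup.continuous_mul_left s⟩

/-- The left multiplicatively continuous functions: `f ∈ Lmc S` iff `T_μ f` is (bounded)
continuous for every character `μ` of `CB(S) = S →ᵇ ℂ` (i.e. every `μ ∈ βS`). -/
def Lmc (S : Type*) [TopologicalSpace S] [Mul S] [SemitopologicalSemigroup S] :
    Set (S →ᵇ ℂ) :=
  {f | ∀ μ : characterSpace ℂ (S →ᵇ ℂ), Continuous fun s : S => (μ (lTrans s f) : ℂ)}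

/-- `E_ε(f) = {x ∈ S : |f x| ≤ ε}`. -/
def Eset {S : Type*} [TopologicalSpace S] (ε : ℝ) (f : S →ᵇ ℂ) : Set S :=
  {x : S | ‖f x‖ ≤ ε}

/-- A zero set of `Lmc S`: `Z(f) = f⁻¹({0})` for some `f ∈ Lmc S`. -/
def IsZeroSet {S : Type*} [TopologicalSpace S] [Mul S] [SemitopologicalSemigroup S]
    (A : Set S) : Prop :=
  ∃ f ∈ Lmc S, A = {x : S | f x = 0}

/-- `E(I) = {E_ε(f) : f ∈ I, ε > 0}`. -/
def Efam {S : Type*} [TopologicalSpace S] [Mul S] [SemitopologicalSemigroup S]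
    (I : Set (S →ᵇ ℂ)) : Set (Set S) :=
  {A | ∃ f ∈ I, ∃ ε : ℝ, 0 < ε ∧ A = Eset ε f}

/-- `E⁻(𝒜) = {f ∈ Lmc S : E_ε(f) ∈ 𝒜 for all ε > 0}`. -/
def Einv {S : Type*} [TopologicalSpace S] [Mul S] [SemitopologicalSemigroup S]
    (𝒜 : Set (Set S)) : Set (S →ᵇ ℂ) :=
  {f | f ∈ Lmc S ∧ ∀ ε : ℝ, 0 < ε → Eset ε f ∈ 𝒜}

/-- A `z`-filter on `Lmc S`. -/
structure IsZFilter {S : Type*} [TopologicalSpace S] [Mul S] [SemitopologicalSemigroup S]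
    (𝒜 : Set (Set S)) : Prop where
  zero_sets : ∀ A ∈ 𝒜, IsZeroSet A
  not_empty_mem : ∅ ∉ 𝒜
  univ_mem : Set.univ ∈ 𝒜
  inter_mem : ∀ A ∈ 𝒜, ∀ B ∈ 𝒜, A ∩ B ∈ 𝒜
  superset_mem : ∀ A ∈ 𝒜, ∀ B : Set S, IsZeroSet B → A ⊆ B → B ∈ 𝒜

/-- An ideal of the algebra `Lmc S`. -/
structure IsIdealLmc {S : Type*} [TopologicalSpace S] [Mul S] [SemitopologicalSemigroup S]
    (I : Set (S →ᵇ ℂ)) : Prop where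
  subset_lmc : I ⊆ Lmc S
  zero_mem : (0 : S →ᵇ ℂ) ∈ I
  add_mem : ∀ f ∈ I, ∀ g ∈ I, f + g ∈ I
  mul_mem : ∀ f ∈ Lmc S, ∀ g ∈ I, f * g ∈ I

/-- A maximal (proper) ideal of `Lmc S`. -/
def IsMaximalIdealLmc {S : Type*} [TopologicalSpace S] [Mul S] [SemitopologicalSemigroup S]
    (M : Set (S →ᵇ ℂ)) : Prop :=
  IsIdealLmc M ∧ M ≠ Lmc S ∧ ∀ J, IsIdealLmc J → J ≠ Lmc S → M ⊆ J → J = M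

/-- An `e`-filter: a `z`-filter with `E(E⁻(𝒜)) = 𝒜`. -/
def IsEFilter {S : Type*} [TopologicalSpace S] [Mul S] [SemitopologicalSemigroup S]
    (𝒜 : Set (Set S)) : Prop :=
  IsZFilter 𝒜 ∧ Efam (Einv 𝒜) = 𝒜

/-- An `e`-ideal: an ideal with `E⁻(E(I)) = I`. -/
def IsEIdeal {S : Type*} [TopologicalSpace S] [Mul S] [SemitopologicalSemigroup S]
    (I : Set (S →ᵇ ℂ)) : Prop :=
  IsIdealLmc I ∧ Einv (Efam I) = I

/-- An `e`-ultrafilter: a maximal `e`-filter. -/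
def IsEUltrafilter {S : Type*} [TopologicalSpace S] [Mul S] [SemitopologicalSemigroup S]
    (p : Set (Set S)) : Prop :=
  IsEFilter p ∧ ∀ q, IsEFilter q → p ⊆ q → q = p

/-- The sum `p + q` of two families of zero sets: `A ∈ p + q` iff `A = E_ε(f)` for some `ε > 0`,
`f ∈ Lmc S`, with `E_δ(q, f) = {x : λ_x⁻¹(E_δ(f)) ∈ q} ∈ p` for all `δ > 0`. -/
def eAdd {S : Type*} [TopologicalSpace S] [Mul S] [SemitopologicalSemigroup S]
    (p q : Set (Set S)) : Set (Set S) :=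
  {A | ∃ ε : ℝ, 0 < ε ∧ ∃ f ∈ Lmc S, A = Eset ε f ∧
    ∀ δ : ℝ, 0 < δ → {x : S | (fun t => x * t) ⁻¹' Eset δ f ∈ q} ∈ p}

/-- The principal `e`-ultrafilter `e(a) = {E_ε(f) : f ∈ Lmc S, f a = 0, ε > 0}`. -/
def ePrinc {S : Type*} [TopologicalSpace S] [Mul S] [SemitopologicalSemigroup S]
    (a : S) : Set (Set S) :=
  {A | ∃ f ∈ Lmc S, f a = 0 ∧ ∃ ε : ℝ, 0 < ε ∧ A = Eset ε f}

section Auxiliary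

variable {S : Type*} [TopologicalSpace S] [Mul S] [SemitopologicalSemigroup S]

lemma lTrans_apply (s : S) (f : S →ᵇ ℂ) (x : S) : lTrans s f x = f (s * x) := rfl

lemma lTrans_add (s : S) (f g : S →ᵇ ℂ) : lTrans s (f + g) = lTrans s f + lTrans s g := by
  ext x; simp [lTrans_apply]

lemma lTrans_sub (s : S) (f g : S →ᵇ ℂ) : lTrans s (f - g) = lTrans s f - lTrans s g := by
  ext x; simp [lTrans_apply]

lemma lTrans_mul (s : S) (f g : S →ᵇ ℂ) : lTrans s (f * g) = lTrans s f * lTrans s g := by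
  ext x; simp [lTrans_apply]

lemma lTrans_star (s : S) (f : S →ᵇ ℂ) : lTrans s (star f) = star (lTrans s f) := by
  ext x; simp [lTrans_apply]

lemma lTrans_const (s : S) (c : ℂ) :
    lTrans s (BoundedContinuousFunction.const S c) = BoundedContinuousFunction.const S c := by
  ext x; simp [lTrans_apply]

lemma lTrans_one (s : S) : lTrans s (1 : S →ᵇ ℂ) = 1 := by
  ext x; simp [lTrans_apply]

lemma lmc_const (c : ℂ) : BoundedContinuousFunction.const S c ∈ Lmc S := by
  intro μ
  have h : (fun s : S => (μ (lTrans s (BoundedContinuousFunction.const S c)) : ℂ))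
      = fun _ : S => (μ (BoundedContinuousFunction.const S c) : ℂ) := by
    funext s; rw [lTrans_const]
  rw [h]; exact continuous_const

lemma lmc_one : (1 : S →ᵇ ℂ) ∈ Lmc S := by
  intro μ
  have h : (fun s : S => (μ (lTrans s (1 : S →ᵇ ℂ)) : ℂ)) = fun _ : S => (μ 1 : ℂ) := by
    funext s; rw [lTrans_one]
  rw [h]; exact continuous_const

lemma lmc_zero : (0 : S →ᵇ ℂ) ∈ Lmc S := by
  have : (0 : S →ᵇ ℂ) = BoundedContinuousFunction.const S 0 := by ext x; simp
  rw [this]; exact lmc_const 0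

lemma lmc_add {f g : S →ᵇ ℂ} (hf : f ∈ Lmc S) (hg : g ∈ Lmc S) : f + g ∈ Lmc S := by
  intro μ
  have h : (fun s : S => (μ (lTrans s (f + g)) : ℂ))
      = fun s : S => (μ (lTrans s f) : ℂ) + μ (lTrans s g) := by
    funext s; rw [lTrans_add, map_add]
  rw [h]; exact (hf μ).add (hg μ)

lemma lmc_sub {f g : S →ᵇ ℂ} (hf : f ∈ Lmc S) (hg : g ∈ Lmc S) : f - g ∈ Lmc S := by
  intro μ
  have h : (fun s : S => (μ (lTrans s (f - g)) : ℂ))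
      = fun s : S => (μ (lTrans s f) : ℂ) - μ (lTrans s g) := by
    funext s; rw [lTrans_sub, map_sub]
  rw [h]; exact (hf μ).sub (hg μ)

lemma lmc_mul {f g : S →ᵇ ℂ} (hf : f ∈ Lmc S) (hg : g ∈ Lmc S) : f * g ∈ Lmc S := by
  intro μ
  have h : (fun s : S => (μ (lTrans s (f * g)) : ℂ))
      = fun s : S => (μ (lTrans s f) : ℂ) * μ (lTrans s g) := by
    funext s; rw [lTrans_mul, map_mul]
  rw [h]; exact (hf μ).mul (hg μ)

lemma lmc_smul (c : ℂ) {f : S →ᵇ ℂ} (hf : f ∈ Lmc S) : c • f ∈ Lmc S := by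
  have : c • f = BoundedContinuousFunction.const S c * f := by
    ext x; simp
  rw [this]; exact lmc_mul (lmc_const c) hf

lemma lmc_star {f : S →ᵇ ℂ} (hf : f ∈ Lmc S) : star f ∈ Lmc S := by
  intro μ
  have h : (fun s : S => (μ (lTrans s (star f)) : ℂ))
      = fun s : S => star ((μ (lTrans s f) : ℂ)) := by
    funext s; rw [lTrans_star, map_star]
  rw [h]; exact (hf μ).star

lemma lmc_aeval {w : S →ᵇ ℂ} (hw : w ∈ Lmc S) (q : Polynomial ℂ) :
    Polynomial.aeval w q ∈ Lmc S := by
  induction q using Polynomial.induction_on with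
  | C a =>
      rw [Polynomial.aeval_C, Algebra.algebraMap_eq_smul_one]
      exact lmc_smul a lmc_one
  | add p q hp hq =>
      rw [map_add]; exact lmc_add hp hq
  | monomial n a ih =>
      have h : (Polynomial.aeval w) (Polynomial.C a * Polynomial.X ^ (n + 1))
          = (Polynomial.aeval w) (Polynomial.C a * Polynomial.X ^ n) * w := by
        rw [map_mul, map_mul, map_pow, map_pow, pow_succ, Polynomial.aeval_X, mul_assoc]
      rw [h]; exact lmc_mul ih hw

lemma lmc_closed (g : S →ᵇ ℂ) (F : ℕ → S →ᵇ ℂ) (hF : ∀ n, F n ∈ Lmc S)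
    (hlim : Filter.Tendsto (fun n => ‖F n - g‖) Filter.atTop (nhds 0)) : g ∈ Lmc S := by
  intro μ
  rcases isEmpty_or_nonempty S with hS | hS
  · exact continuous_iff_continuousAt.mpr fun x => isEmptyElim x
  have key : TendstoUniformly (fun n (s : S) => (μ (lTrans s (F n)) : ℂ))
      (fun s => (μ (lTrans s g) : ℂ)) Filter.atTop := by
    rw [Metric.tendstoUniformly_iff]
    intro ε hε
    have h2 : ∀ᶠ n in Filter.atTop, ‖F n - g‖ < ε := by
      filter_upwards [Metric.tendsto_nhds.mp hlim ε hε] with n hn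
      simpa [Real.dist_eq, abs_of_nonneg (norm_nonneg _)] using hn
    filter_upwards [h2] with n hn s
    have e1 : lTrans s g - lTrans s (F n) = lTrans s (g - F n) := (lTrans_sub s g (F n)).symm
    calc dist ((μ (lTrans s g) : ℂ)) ((μ (lTrans s (F n)) : ℂ))
        = ‖(μ (lTrans s g) : ℂ) - μ (lTrans s (F n))‖ := dist_eq_norm _ _
      _ = ‖(μ (lTrans s g - lTrans s (F n)) : ℂ)‖ := by rw [map_sub]
      _ = ‖(μ (lTrans s (g - F n)) : ℂ)‖ := by rw [e1]
      _ ≤ ‖lTrans s (g - F n)‖ := AlgHom.norm_apply_le_self μ _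
      _ ≤ ‖g - F n‖ := BoundedContinuousFunction.norm_compContinuous_le _ _
      _ < ε := by rwa [norm_sub_rev]
  exact key.continuous (Filter.Eventually.of_forall fun n => hF n μ).frequently

/-- Point evaluation as an algebra homomorphism. -/
noncomputable def bcfEvalHom (x : S) : (S →ᵇ ℂ) →ₐ[ℂ] ℂ where
  toFun g := g x
  map_one' := rfl
  map_mul' _ _ := rfl
  map_zero' := rfl
  map_add' _ _ := rfl
  commutes' _ := rfl

lemma cnorm_real (r : ℝ) : ‖((r : ℝ) : ℂ)‖ = |r| := by
  rw [Complex.norm_real, Real.norm_eq_abs]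

/-- Master lemma: `Lmc S` is stable under composing the pointwise norm with a continuous
real function. -/
lemma exists_normComp (f : S →ᵇ ℂ) (hf : f ∈ Lmc S) (h : ℝ → ℝ) (hc : Continuous h) :
    ∃ g : S →ᵇ ℂ, g ∈ Lmc S ∧ ∀ x, g x = ((h ‖f x‖ : ℝ) : ℂ) := by
  -- a bound for `h` on `[0, ‖f‖]`
  obtain ⟨M, hM⟩ := (isCompact_Icc (a := (0:ℝ)) (b := ‖f‖)).exists_bound_of_continuousOn
    hc.continuousOn
  have hmem : ∀ x : S, ‖f x‖ ∈ Set.Icc (0:ℝ) ‖f‖ := fun x =>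
    ⟨norm_nonneg _, BoundedContinuousFunction.norm_coe_le_norm f x⟩
  have gcont : Continuous fun x : S => ((h ‖f x‖ : ℝ) : ℂ) :=
    Complex.continuous_ofReal.comp (hc.comp f.continuous.norm)
  set g : S →ᵇ ℂ := BoundedContinuousFunction.ofNormedAddCommGroup _ gcont M
    (fun x => by rw [cnorm_real]; exact hM _ (hmem x)) with hg
  have hgx : ∀ x, g x = ((h ‖f x‖ : ℝ) : ℂ) := fun x => rfl
  refine ⟨g, ?_, hgx⟩
  -- Weierstrass approximation of `t ↦ h (√t)` on `[0, ‖f‖ ^ 2]`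
  have Hcont : Continuous fun t : ℝ => h (Real.sqrt t) := hc.comp Real.continuous_sqrt
  have hpoly : ∀ n : ℕ, ∃ p : Polynomial ℝ,
      ∀ t ∈ Set.Icc (0:ℝ) (‖f‖ ^ 2), |p.eval t - h (Real.sqrt t)| < 1 / (n + 1) := by
    intro n
    exact exists_polynomial_near_of_continuousOn 0 (‖f‖ ^ 2) _ Hcont.continuousOn _
      (by positivity)
  choose p hp using hpoly
  -- `w = star f * f` has values `‖f x‖ ^ 2`
  set w : S →ᵇ ℂ := star f * f with hwdef
  have hw : w ∈ Lmc S := lmc_mul (lmc_star hf) hf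
  have hwx : ∀ x, w x = (((‖f x‖ ^ 2 : ℝ)) : ℂ) := by
    intro x
    have h0 : w x = star (f x) * f x := rfl
    rw [h0, Complex.star_def, mul_comm, Complex.mul_conj]
    congr 1
    rw [← Complex.sq_norm]
  -- the approximating sequence
  set G : ℕ → (S →ᵇ ℂ) := fun n => Polynomial.aeval w ((p n).map (algebraMap ℝ ℂ)) with hGdef
  have hGmem : ∀ n, G n ∈ Lmc S := fun n => lmc_aeval hw _
  have hGx : ∀ (n : ℕ) (x : S), G n x = (((p n).eval (‖f x‖ ^ 2) : ℝ) : ℂ) := by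
    intro n x
    have h1 : G n x = Polynomial.aeval (w x) ((p n).map (algebraMap ℝ ℂ)) := by
      have := Polynomial.aeval_algHom_apply (bcfEvalHom x) w ((p n).map (algebraMap ℝ ℂ))
      exact this.symm
    rw [h1, hwx x, Polynomial.aeval_def, Polynomial.eval₂_map]
    have h2 : ((‖f x‖ ^ 2 : ℝ) : ℂ) = ((algebraMap ℂ ℂ).comp (algebraMap ℝ ℂ)) (‖f x‖ ^ 2) := by
      simp
    rw [h2, Polynomial.eval₂_at_apply]
    simp
  have hnorm : ∀ n : ℕ, ‖G n - g‖ ≤ 1 / (n + 1) := by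
    intro n
    refine (BoundedContinuousFunction.norm_le (by positivity)).mpr fun x => ?_
    rw [BoundedContinuousFunction.coe_sub, Pi.sub_apply, hGx n x, hgx x]
    have h3 : h ‖f x‖ = h (Real.sqrt (‖f x‖ ^ 2)) := by rw [Real.sqrt_sq (norm_nonneg _)]
    rw [h3, ← Complex.ofReal_sub, cnorm_real]
    exact le_of_lt (hp n _ ⟨by positivity,
      pow_le_pow_left₀ (norm_nonneg _) (BoundedContinuousFunction.norm_coe_le_norm f x) 2⟩)
  exact lmc_closed g G hGmem
    (squeeze_zero (fun n => norm_nonneg _) hnorm tendsto_one_div_add_atTop_nhds_zero_nat)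

lemma half_max (a b : ℝ) : max a b = 2⁻¹ * (a + b + |a - b|) := by
  rcases le_total a b with h | h
  · rw [max_eq_right h, abs_of_nonpos (sub_nonpos.mpr h)]; ring
  · rw [max_eq_left h, abs_of_nonneg (sub_nonneg.mpr h)]; ring

lemma half_min (a b : ℝ) : min a b = 2⁻¹ * (a + b - |a - b|) := by
  rcases le_total a b with h | h
  · rw [min_eq_left h, abs_of_nonpos (sub_nonpos.mpr h)]; ring
  · rw [min_eq_right h, abs_of_nonneg (sub_nonneg.mpr h)]; ring

lemma exists_lmc_absdiff {u v : S →ᵇ ℂ} (hu : u ∈ Lmc S) (hv : v ∈ Lmc S)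
    {u' v' : S → ℝ} (hu' : ∀ x, u x = ((u' x : ℝ) : ℂ)) (hv' : ∀ x, v x = ((v' x : ℝ) : ℂ)) :
    ∃ a : S →ᵇ ℂ, a ∈ Lmc S ∧ ∀ x, a x = ((|u' x - v' x| : ℝ) : ℂ) := by
  obtain ⟨a, ha, hax⟩ := exists_normComp (u - v) (lmc_sub hu hv) (fun t => t) continuous_id
  refine ⟨a, ha, fun x => ?_⟩
  rw [hax x]
  have : (u - v) x = ((u' x - v' x : ℝ) : ℂ) := by
    rw [BoundedContinuousFunction.coe_sub, Pi.sub_apply, hu' x, hv' x, Complex.ofReal_sub]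
  rw [this, cnorm_real]

lemma exists_lmc_max {u v : S →ᵇ ℂ} (hu : u ∈ Lmc S) (hv : v ∈ Lmc S)
    {u' v' : S → ℝ} (hu' : ∀ x, u x = ((u' x : ℝ) : ℂ)) (hv' : ∀ x, v x = ((v' x : ℝ) : ℂ)) :
    ∃ m : S →ᵇ ℂ, m ∈ Lmc S ∧ ∀ x, m x = ((max (u' x) (v' x) : ℝ) : ℂ) := by
  obtain ⟨a, ha, hax⟩ := exists_lmc_absdiff hu hv hu' hv'
  refine ⟨(2⁻¹ : ℂ) • (u + v + a), lmc_smul _ (lmc_add (lmc_add hu hv) ha), fun x => ?_⟩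
  have : ((2⁻¹ : ℂ) • (u + v + a)) x = (2⁻¹ : ℂ) * (u x + v x + a x) := by
    simp [smul_eq_mul]; try ring
  rw [this, hu' x, hv' x, hax x, half_max]
  push_cast
  ring

lemma exists_lmc_min {u v : S →ᵇ ℂ} (hu : u ∈ Lmc S) (hv : v ∈ Lmc S)
    {u' v' : S → ℝ} (hu' : ∀ x, u x = ((u' x : ℝ) : ℂ)) (hv' : ∀ x, v x = ((v' x : ℝ) : ℂ)) :
    ∃ m : S →ᵇ ℂ, m ∈ Lmc S ∧ ∀ x, m x = ((min (u' x) (v' x) : ℝ) : ℂ) := by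
  obtain ⟨a, ha, hax⟩ := exists_lmc_absdiff hu hv hu' hv'
  refine ⟨(2⁻¹ : ℂ) • (u + v - a), lmc_smul _ (lmc_sub (lmc_add hu hv) ha), fun x => ?_⟩
  have : ((2⁻¹ : ℂ) • (u + v - a)) x = (2⁻¹ : ℂ) * (u x + v x - a x) := by
    simp [smul_eq_mul]; try ring
  rw [this, hu' x, hv' x, hax x, half_min]
  push_cast
  ring

lemma eset_isZeroSet {f : S →ᵇ ℂ} (hf : f ∈ Lmc S) (ε : ℝ) : IsZeroSet (Eset ε f) := by
  obtain ⟨g, hg, hgx⟩ := exists_normComp f hf (fun t => max (t - ε) 0)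
    ((continuous_id.sub continuous_const).max continuous_const)
  refine ⟨g, hg, ?_⟩
  ext x
  simp only [Eset, Set.mem_setOf_eq, hgx x, Complex.ofReal_eq_zero]
  rw [max_eq_right_iff, sub_nonpos]

lemma eset_zero_fn (σ : ℝ) (hσ : 0 < σ) : Eset σ (0 : S →ᵇ ℂ) = Set.univ := by
  ext x
  simp [Eset, le_of_lt hσ]

end Auxiliary

theorem stmt13 {S : Type*} [TopologicalSpace S] [T2Space S] [Semigroup S]
    [SemitopologicalSemigroup S] (𝒜 : Set (Set S)) (h𝒜 : IsZFilter 𝒜) :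
    IsEFilter (Efam (Einv 𝒜)) ∧ Efam (Einv 𝒜) ⊆ 𝒜 ∧
    ∀ ℬ : Set (Set S), IsEFilter ℬ → ℬ ⊆ 𝒜 → ℬ ⊆ Efam (Einv 𝒜) := by
  have hsub : Efam (Einv 𝒜) ⊆ 𝒜 := by
    rintro A ⟨f, hf, ε, hε, rfl⟩
    exact hf.2 ε hε
  have hzero : (0 : S →ᵇ ℂ) ∈ Einv 𝒜 := by
    refine ⟨lmc_zero, fun σ hσ => ?_⟩
    rw [eset_zero_fn σ hσ]
    exact h𝒜.univ_mem
  -- the z-filter property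
  have hz : IsZFilter (Efam (Einv 𝒜)) := by
    constructor
    · rintro A ⟨f, hf, ε, hε, rfl⟩
      exact eset_isZeroSet hf.1 ε
    · rintro ⟨f, hf, ε, hε, hempty⟩
      have := hf.2 ε hε
      rw [← hempty] at this
      exact h𝒜.not_empty_mem this
    · exact ⟨0, hzero, 1, one_pos, (eset_zero_fn 1 one_pos).symm⟩
    · -- intersection
      rintro A ⟨f, hf, ε, hε, rfl⟩ B ⟨g, hg, δ, hδ, rfl⟩
      obtain ⟨u, hu, hux⟩ := exists_normComp f hf.1 (fun t => t / ε)
        (continuous_id.div_const ε)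
      obtain ⟨v, hv, hvx⟩ := exists_normComp g hg.1 (fun t => t / δ)
        (continuous_id.div_const δ)
      obtain ⟨m, hm, hmx⟩ := exists_lmc_max hu hv hux hvx
      have hEm : ∀ σ : ℝ, 0 < σ → Eset σ m = Eset (σ * ε) f ∩ Eset (σ * δ) g := by
        intro σ hσ
        ext x
        have hnn : 0 ≤ max (‖f x‖ / ε) (‖g x‖ / δ) :=
          le_trans (div_nonneg (norm_nonneg _) hε.le) (le_max_left _ _)
        simp only [Eset, Set.mem_setOf_eq, Set.mem_inter_iff, hmx x, cnorm_real,
          abs_of_nonneg hnn]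
        rw [max_le_iff, div_le_iff₀ hε, div_le_iff₀ hδ]
      have hmI : m ∈ Einv 𝒜 := by
        refine ⟨hm, fun σ hσ => ?_⟩
        rw [hEm σ hσ]
        exact h𝒜.inter_mem _ (hf.2 _ (by positivity)) _ (hg.2 _ (by positivity))
      refine ⟨m, hmI, 1, one_pos, ?_⟩
      rw [hEm 1 one_pos, one_mul, one_mul]
    · -- supersets
      rintro A ⟨f, hf, ε, hε, rfl⟩ B ⟨g, hgL, rfl⟩ hAB
      obtain ⟨u, hu, hux⟩ := exists_normComp f hf.1 (fun t => t / ε)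
        (continuous_id.div_const ε)
      obtain ⟨v, hv, hvx⟩ := exists_normComp g hgL (fun t => 1 + t)
        (continuous_const.add continuous_id)
      obtain ⟨m, hm, hmx⟩ := exists_lmc_min hu hv hux hvx
      have hnn : ∀ x, 0 ≤ min (‖f x‖ / ε) (1 + ‖g x‖) := fun x =>
        le_min (div_nonneg (norm_nonneg _) hε.le) (by positivity)
      have hnorm : ∀ x, ‖m x‖ = min (‖f x‖ / ε) (1 + ‖g x‖) := by
        intro x
        rw [hmx x, cnorm_real, abs_of_nonneg (hnn x)]
      have hEσ : ∀ σ : ℝ, 0 < σ → Eset (σ * ε) f ⊆ Eset σ m := by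
        intro σ hσ x hx
        have hx' : ‖f x‖ ≤ σ * ε := hx
        have : ‖f x‖ / ε ≤ σ := (div_le_iff₀ hε).mpr hx'
        show ‖m x‖ ≤ σ
        rw [hnorm x]
        exact le_trans (min_le_left _ _) this
      have hmI : m ∈ Einv 𝒜 := by
        refine ⟨hm, fun σ hσ => ?_⟩
        exact h𝒜.superset_mem _ (hf.2 (σ * ε) (by positivity)) _
          (eset_isZeroSet hm σ) (hEσ σ hσ)
      refine ⟨m, hmI, 1, one_pos, ?_⟩
      ext x
      simp only [Set.mem_setOf_eq, Eset, hnorm x]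
      rw [min_le_iff]
      constructor
      · intro hx
        right
        rw [hx, norm_zero]
        linarith
      · intro hx
        rcases hx with hx | hx
        · have hmem : x ∈ Eset ε f := by
            show ‖f x‖ ≤ ε
            rw [div_le_iff₀ hε] at hx
            simpa using hx
          exact hAB hmem
        · have : ‖g x‖ ≤ 0 := by linarith
          exact norm_le_zero_iff.mp this
  have hEE : Efam (Einv (Efam (Einv 𝒜))) = Efam (Einv 𝒜) := by
    apply Set.Subset.antisymm
    · rintro A ⟨f, hf, ε, hε, rfl⟩
      exact ⟨f, ⟨hf.1, fun σ hσ => hsub (hf.2 σ hσ)⟩, ε, hε, rfl⟩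
    · rintro A ⟨f, hf, ε, hε, rfl⟩
      exact ⟨f, ⟨hf.1, fun σ hσ => ⟨f, hf, σ, hσ, rfl⟩⟩, ε, hε, rfl⟩
  refine ⟨⟨hz, hEE⟩, hsub, ?_⟩
  intro ℬ hB hBA A hA
  rw [← hB.2] at hA
  obtain ⟨f, hf, ε, hε, rfl⟩ := hA
  exact ⟨f, ⟨hf.1, fun σ hσ => hBA (hf.2 σ hσ)⟩, ε, hε, rfl⟩
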